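/- Let μ be a finitely additive measure on Ω, z ∉ {−1,0,1}, f = P_z(μ), and let x_0, x_1, …, x_k be a chain pointing away from o with d(o,x_0) = m. Then f(x_k)/z^{m+k} = f(x_0)/z^{m+2k} + ((z²−1)/z²) Σ_{j=1}^{k} z^{2(j−k)} μ(Ω(x_j)), where Ω(x) is the set of ends ω with x ∈ [o,ω[. -/

import Mathlib

open SimpleGraph

variable {V : Type*}

/-- The type of directed edges of a graph. -/
def DEdge (G : SimpleGraph V) : Type _ := {p : V × V // G.Adj p.1 p.2}

/-- Initial vertex of a directed edge. -/
def DEdge.ini {G : SimpleGraph V} (e : DEdge G) : V := e.1.1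

/-- Terminal vertex of a directed edge. -/
def DEdge.ter {G : SimpleGraph V} (e : DEdge G) : V := e.1.2

/-- Orientation reversal of a directed edge. -/
def DEdge.op {G : SimpleGraph V} (e : DEdge G) : DEdge G := ⟨(e.1.2, e.1.1), e.2.symm⟩

/-- The sum of an edge function over all directed edges with initial vertex `x`. -/
noncomputable def edgeSum (G : SimpleGraph V) (x : V) (F : DEdge G → ℂ) : ℂ :=
  ∑ᶠ (e : DEdge G) (_ : e.ini = x), F e

/-- The space `L(E⃗)`: edge functions `F` with
`F(e⃗) + F(e⃗^op) = z = Σ_{ι(e⃗')=x} F(e⃗')` for some common `z`. -/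
def memL (G : SimpleGraph V) (F : DEdge G → ℂ) : Prop :=
  ∃ z : ℂ, (∀ e : DEdge G, F e + F e.op = z) ∧ (∀ x : V, edgeSum G x F = z)

/-- A directed edge points away from the base point `o`. -/
def PointsAway (G : SimpleGraph V) (o : V) (e : DEdge G) : Prop :=
  G.dist o e.ter = G.dist o e.ini + 1

/-- The directed edges pointing away from `o`. -/
def DEdgeAway (G : SimpleGraph V) (o : V) : Type _ := {e : DEdge G // PointsAway G o e}

/-- Sum of a function on away-pointing edges over the edges with initial vertex `x`. -/
noncomputable def edgeSumAway (G : SimpleGraph V) (o : V) (x : V)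
    (F : DEdgeAway G o → ℂ) : ℂ :=
  ∑ᶠ (e : DEdgeAway G o) (_ : e.1.ini = x), F e

/-- The space `L(E⃗_o)`: functions on away-pointing edges with
`F(e⃗) = Σ_{ι(e⃗')=τ(e⃗)} F(e⃗')`. -/
def memLAway (G : SimpleGraph V) (o : V) (F : DEdgeAway G o → ℂ) : Prop :=
  ∀ e : DEdgeAway G o, F e = edgeSumAway G o e.1.ter F

/-- The boundary `Ω` of the tree, realized as the set of geodesic rays based at `o`. -/
def Ray (G : SimpleGraph V) (o : V) : Type _ :=
  {r : ℕ → V // r 0 = o ∧ (∀ n, G.Adj (r n) (r (n + 1))) ∧ ∀ n, G.dist o (r n) = n}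

/-- `Ω_o(v)`: the ends whose ray from `o` passes through `v`. -/
def raysThrough (G : SimpleGraph V) (o v : V) : Set (Ray G o) :=
  {ω | ∃ n, ω.1 n = v}

/-- The natural (compact, totally disconnected) topology on the boundary,
generated by the sets `Ω_o(v)`. -/
instance rayTopology (G : SimpleGraph V) (o : V) : TopologicalSpace (Ray G o) :=
  TopologicalSpace.generateFrom {S | ∃ v : V, S = raysThrough G o v}

/-- `∂₊ e⃗`: the set of ends reachable through the directed edge `e⃗`. -/
def dplus (G : SimpleGraph V) (o : V) (e : DEdge G) : Set (Ray G o) :=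
  {ω | ∃ N, ∀ n ≥ N, G.dist e.ter (ω.1 n) + 1 = G.dist e.ini (ω.1 n)}

/-- A finitely additive measure on the clopen subsets of a space. -/
def IsFAMeasure {Z : Type*} [TopologicalSpace Z] (μ : Set Z → ℂ) : Prop :=
  μ ∅ = 0 ∧ ∀ U U' : Set Z, IsClopen U → IsClopen U' →
    μ (U ∪ U') + μ (U ∩ U') = μ U + μ U'

/-- The tree Laplacian: the average of `f` over the neighbors of `x`. -/
noncomputable def lap (G : SimpleGraph V) [G.LocallyFinite] (f : V → ℂ) (x : V) : ℂ :=
  (G.degree x : ℂ)⁻¹ * ∑ y ∈ G.neighborFinset x, f y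

/-- The horocycle bracket `⟨·,·⟩ : X × Ω → ℤ` for base point `o`: the eventual
value of `n - d(x, ω_n)` along the ray `ω`. -/
def IsHorocycleBracket (G : SimpleGraph V) (o : V) (brk : V → Ray G o → ℤ) : Prop :=
  ∀ (x : V) (ω : Ray G o), ∃ N : ℕ, ∀ n : ℕ, n ≥ N → brk x ω = (n : ℤ) - (G.dist x (ω.1 n) : ℤ)

/-- The Poisson transform `P_z(μ)(x) = ∫_Ω z^{⟨x,ω⟩} dμ(ω)`, i.e. the pairing of
`μ` with the locally constant function `ω ↦ z^{⟨x,ω⟩}`. -/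
noncomputable def poisson (G : SimpleGraph V) (o : V) (brk : V → Ray G o → ℤ)
    (z : ℂ) (μ : Set (Ray G o) → ℂ) (x : V) : ℂ :=
  ∑ᶠ c : ℂ, c * μ {ω : Ray G o | z ^ brk x ω = c}


open SimpleGraph

namespace TreeAux

variable {V : Type*} {G : SimpleGraph V}

lemma path_unique (ht : G.IsTree) {a b : V} {p q : G.Walk a b}
    (hp : p.IsPath) (hq : q.IsPath) : p = q :=
  ((ht.existsUnique_path a b).unique hp hq)

lemma exists_geodesic (ht : G.IsTree) (a b : V) :
    ∃ p : G.Walk a b, p.IsPath ∧ p.length = G.dist a b := by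
  classical
  obtain ⟨p, hp⟩ := ht.isConnected.exists_walk_length_eq_dist a b
  refine ⟨p.bypass, p.bypass_isPath, le_antisymm ?_ (SimpleGraph.dist_le _)⟩
  calc p.bypass.length ≤ p.length := p.length_bypass_le
    _ = G.dist a b := hp

lemma adj_dist {x y : V} (h : G.Adj x y) : G.dist x y = 1 :=
  SimpleGraph.dist_eq_one_iff_adj.mpr h

/-- Trichotomy: distances to the two endpoints of an edge differ by exactly one. -/
lemma dist_tri (ht : G.IsTree) {x y : V} (h : G.Adj x y) (w : V) :
    G.dist x w + 1 = G.dist y w ∨ G.dist y w + 1 = G.dist x w := by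
  classical
  obtain ⟨p, hp, hl⟩ := exists_geodesic ht x w
  by_cases hy : y ∈ p.support
  · right
    have h1 : p.takeUntil y hy = (SimpleGraph.Path.singleton h).1 :=
      path_unique ht (hp.takeUntil hy) (SimpleGraph.Path.singleton h).2
    have hlen1 : (p.takeUntil y hy).length = 1 := by
      rw [h1]; simp [SimpleGraph.Path.singleton]
    have hsum : (p.takeUntil y hy).length + (p.dropUntil y hy).length = p.length := by
      have := congrArg SimpleGraph.Walk.length (p.take_spec hy)
      rwa [SimpleGraph.Walk.length_append] at this
    have h2 : G.dist y w ≤ (p.dropUntil y hy).length := SimpleGraph.dist_le _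
    have h3 : G.dist x w ≤ G.dist x y + G.dist y w :=
      ht.isConnected.dist_triangle
    rw [adj_dist h] at h3
    omega
  · left
    obtain ⟨r, hr, hrl⟩ := exists_geodesic ht y w
    have hq : (SimpleGraph.Walk.cons h.symm p).IsPath :=
      (SimpleGraph.Walk.cons_isPath_iff _ _).mpr ⟨hp, hy⟩
    have h4 : r = SimpleGraph.Walk.cons h.symm p := path_unique ht hr hq
    have h5 : r.length = p.length + 1 := by rw [h4]; simp
    omega

/-- Existence of a neighbor strictly closer to a target. -/
lemma exists_closer (ht : G.IsTree) {w x : V} (hne : G.dist w x ≠ 0) :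
    ∃ s, G.Adj w s ∧ G.dist s x + 1 = G.dist w x := by
  obtain ⟨p, hp, hl⟩ := exists_geodesic ht w x
  cases p with
  | nil => simp at hne
  | @cons _ s _ hadj q =>
    refine ⟨s, hadj, ?_⟩
    have h1 : G.dist s x ≤ q.length := SimpleGraph.dist_le _
    have h2 : G.dist w x ≤ G.dist w s + G.dist s x := ht.isConnected.dist_triangle
    rw [adj_dist hadj] at h2
    simp only [SimpleGraph.Walk.length_cons] at hl
    omega

/-- Uniqueness of the closer neighbor in a tree. -/
lemma closer_unique (ht : G.IsTree) {w t y₁ y₂ : V}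
    (h1 : G.Adj w y₁) (h2 : G.Adj w y₂)
    (hd1 : G.dist y₁ t + 1 = G.dist w t) (hd2 : G.dist y₂ t + 1 = G.dist w t) :
    y₁ = y₂ := by
  classical
  have key : ∀ y : V, G.Adj w y → G.dist y t + 1 = G.dist w t →
      ∃ (p : G.Walk w t), p.IsPath ∧ p.getVert 1 = y := by
    intro y hy hd
    obtain ⟨p, hp, hl⟩ := exists_geodesic ht y t
    have hw : w ∉ p.support := by
      intro hmem
      have hdrop : G.dist w t ≤ (p.dropUntil w hmem).length := SimpleGraph.dist_le _
      have hsum : (p.takeUntil w hmem).length + (p.dropUntil w hmem).length = p.length := by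
        have := congrArg SimpleGraph.Walk.length (p.take_spec hmem)
        rwa [SimpleGraph.Walk.length_append] at this
      have htk : (p.takeUntil w hmem).length ≠ 0 := by
        intro h0
        exact hy.ne' (SimpleGraph.Walk.eq_of_length_eq_zero h0)
      omega
    exact ⟨SimpleGraph.Walk.cons hy p, (SimpleGraph.Walk.cons_isPath_iff _ _).mpr ⟨hp, hw⟩,
      (SimpleGraph.Walk.getVert_cons_succ (n := 0) p hy).trans p.getVert_zero⟩
  obtain ⟨p1, hp1, hg1⟩ := key y₁ h1 hd1
  obtain ⟨p2, hp2, hg2⟩ := key y₂ h2 hd2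
  rw [← hg1, ← hg2, path_unique ht hp1 hp2]

end TreeAux

namespace RayAux

open TreeAux

variable {V : Type*} {G : SimpleGraph V} {o : V}

lemma ray_dist (ω : Ray G o) (n : ℕ) : G.dist o (ω.1 n) = n := ω.2.2.2 n

lemma ray_adj (ω : Ray G o) (n : ℕ) : G.Adj (ω.1 n) (ω.1 (n + 1)) := ω.2.2.1 n

lemma ray_zero (ω : Ray G o) : ω.1 0 = o := ω.2.1

/-- Every ray eventually moves away from any fixed vertex, after time `G.dist o v`,
and before the turning time it approaches `v` at unit speed. -/
lemma turning (ht : G.IsTree) (v : V) (ω : Ray G o) :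
    ∃ j, j ≤ G.dist o v ∧
      (∀ n, j ≤ n → G.dist v (ω.1 (n + 1)) = G.dist v (ω.1 n) + 1) ∧
      (∀ n, n ≤ j → (G.dist v (ω.1 n) : ℤ) = (G.dist o v : ℤ) - n) := by
  have tri : ∀ n, G.dist v (ω.1 (n + 1)) = G.dist v (ω.1 n) + 1 ∨
      G.dist v (ω.1 (n + 1)) + 1 = G.dist v (ω.1 n) := by
    intro n
    have c1 : G.dist (ω.1 n) v = G.dist v (ω.1 n) := SimpleGraph.dist_comm
    have c2 : G.dist (ω.1 (n+1)) v = G.dist v (ω.1 (n+1)) := SimpleGraph.dist_comm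
    rcases dist_tri ht (ray_adj ω n) v with h | h
    · left; omega
    · right; omega
  -- if no increase happened before time n, the ray has approached v at unit speed
  have aux : ∀ n, (∀ i, i < n → ¬ (G.dist v (ω.1 (i + 1)) = G.dist v (ω.1 i) + 1)) →
      (G.dist v (ω.1 n) : ℤ) = (G.dist o v : ℤ) - n := by
    intro n
    induction n with
    | zero => intro _; rw [ray_zero, G.dist_comm]; simp
    | succ n ih =>
      intro hno
      have h1 := ih (fun i hi => hno i (by omega))
      have h2 := hno n (by omega)
      rcases tri n with h | h
      · exact absurd h h2
      · push_cast; omega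
  have hex : ∃ j, G.dist v (ω.1 (j + 1)) = G.dist v (ω.1 j) + 1 := by
    by_contra hno
    push_neg at hno
    have := aux (G.dist o v + 1) (fun i _ => hno i)
    have h0 : (0 : ℤ) ≤ (G.dist v (ω.1 (G.dist o v + 1)) : ℤ) := Int.natCast_nonneg _
    omega
  classical
  let j := Nat.find hex
  have hjspec : G.dist v (ω.1 (j + 1)) = G.dist v (ω.1 j) + 1 := Nat.find_spec hex
  have hjmin : ∀ i, i < j → ¬ (G.dist v (ω.1 (i + 1)) = G.dist v (ω.1 i) + 1) :=
    fun i hi => Nat.find_min hex hi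
  have hpre : ∀ n, n ≤ j → (G.dist v (ω.1 n) : ℤ) = (G.dist o v : ℤ) - n :=
    fun n hn => aux n (fun i hi => hjmin i (by omega))
  have hjle : j ≤ G.dist o v := by
    have := hpre j le_rfl
    have h0 : (0 : ℤ) ≤ (G.dist v (ω.1 j) : ℤ) := Int.natCast_nonneg _
    omega
  -- once increasing, always increasing
  have once : ∀ n, G.dist v (ω.1 (n + 1)) = G.dist v (ω.1 n) + 1 →
      G.dist v (ω.1 (n + 2)) = G.dist v (ω.1 (n + 1)) + 1 := by
    intro n hn
    rcases tri (n + 1) with h | h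
    · exact h
    · exfalso
      simp only [show n + 1 + 1 = n + 2 from rfl] at h
      have he : ω.1 n = ω.1 (n + 2) := by
        refine closer_unique ht (y₁ := ω.1 n) (y₂ := ω.1 (n + 2)) (w := ω.1 (n + 1))
          (t := v) (ray_adj ω n).symm (ray_adj ω (n + 1)) ?_ ?_
        · have c1 : G.dist (ω.1 n) v = G.dist v (ω.1 n) := SimpleGraph.dist_comm
          have c2 : G.dist (ω.1 (n+1)) v = G.dist v (ω.1 (n+1)) := SimpleGraph.dist_comm
          omega
        · have c1 : G.dist (ω.1 (n+2)) v = G.dist v (ω.1 (n+2)) := SimpleGraph.dist_comm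
          have c2 : G.dist (ω.1 (n+1)) v = G.dist v (ω.1 (n+1)) := SimpleGraph.dist_comm
          omega
      have e1 := ray_dist ω n
      have e2 := ray_dist ω (n + 2)
      rw [he] at e1
      omega
  refine ⟨j, hjle, ?_, hpre⟩
  intro n hn
  induction n with
  | zero =>
    have hj0 : j = 0 := Nat.le_zero.mp hn
    rw [hj0] at hjspec
    exact hjspec
  | succ n ih =>
    rcases Nat.lt_or_ge j (n + 1) with h | h
    · exact once n (ih (by omega))
    · have : j = n + 1 := by omega
      exact this ▸ hjspec

/-- After the turning point, distance to `v` along the ray. -/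
lemma dist_after (ht : G.IsTree) (v : V) (ω : Ray G o) :
    ∃ j, j ≤ G.dist o v ∧
      (∀ n, j ≤ n → G.dist v (ω.1 (n + 1)) = G.dist v (ω.1 n) + 1) ∧
      (∀ n, n ≤ j → (G.dist v (ω.1 n) : ℤ) = (G.dist o v : ℤ) - n) ∧
      (∀ n, j ≤ n → (G.dist v (ω.1 n) : ℤ) = (G.dist o v : ℤ) - 2 * j + n) := by
  obtain ⟨j, hj, hinc, hpre⟩ := turning ht v ω
  refine ⟨j, hj, hinc, hpre, ?_⟩
  intro n hn
  obtain ⟨k, rfl⟩ : ∃ k, n = j + k := ⟨n - j, by omega⟩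
  clear hn
  induction k with
  | zero =>
    have h := hpre j le_rfl
    simp only [Nat.add_zero]
    omega
  | succ k ih =>
    have := hinc (j + k) (by omega)
    have hjk : j + (k + 1) = (j + k) + 1 := by omega
    rw [hjk]
    push_cast at ih ⊢
    omega

end RayAux
namespace BrkAux

open TreeAux RayAux

variable {V : Type*} {G : SimpleGraph V} {o : V} {brk : V → Ray G o → ℤ}

lemma brk_eq (ht : G.IsTree) (hbrk : IsHorocycleBracket G o brk)
    (x : V) (ω : Ray G o) {n : ℕ} (hn : G.dist o x ≤ n) :
    brk x ω = (n : ℤ) - G.dist x (ω.1 n) := by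
  obtain ⟨j, hj, _, _, hafter⟩ := dist_after ht x ω
  obtain ⟨N, hN⟩ := hbrk x ω
  have h1 : brk x ω = ((max n N : ℕ) : ℤ) - G.dist x (ω.1 (max n N)) :=
    hN _ (le_max_right _ _)
  have h2 := hafter (max n N) (le_trans (le_trans hj hn) (le_max_left _ _))
  have h3 := hafter n (le_trans hj hn)
  have h4 : ((max n N : ℕ) : ℤ) = max (n : ℤ) (N : ℤ) := by push_cast; rfl
  have h5 : (n : ℤ) ≤ ((max n N : ℕ) : ℤ) := by
    have := le_max_left n N
    exact_mod_cast this
  omega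

lemma brk_mem (ht : G.IsTree) (hbrk : IsHorocycleBracket G o brk) (x : V) (ω : Ray G o) :
    brk x ω ∈ Finset.Icc (-(G.dist o x : ℤ)) (G.dist o x : ℤ) := by
  have h := brk_eq ht hbrk x ω (le_refl (G.dist o x))
  have h2 : G.dist x (ω.1 (G.dist o x)) ≤ G.dist x o + G.dist o (ω.1 (G.dist o x)) :=
    ht.isConnected.dist_triangle
  have h3 := ray_dist ω (G.dist o x)
  have h4 : G.dist x o = G.dist o x := SimpleGraph.dist_comm
  simp only [Finset.mem_Icc]
  omega

lemma mem_raysThrough_iff (v : V) (ω : Ray G o) :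
    ω ∈ raysThrough G o v ↔ ω.1 (G.dist o v) = v := by
  constructor
  · rintro ⟨n, hn⟩
    have hd : G.dist o v = n := by rw [← hn, ray_dist]
    rw [hd]; exact hn
  · intro h; exact ⟨_, h⟩

variable {x y : V}

lemma brk_of_mem_self (ht : G.IsTree) (hbrk : IsHorocycleBracket G o brk)
    (ω : Ray G o) (hmem : ω ∈ raysThrough G o y) :
    brk y ω = (G.dist o y : ℤ) := by
  have h := brk_eq ht hbrk y ω (le_refl (G.dist o y))
  rw [(mem_raysThrough_iff y ω).mp hmem] at h
  rw [h, SimpleGraph.dist_self]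
  simp

lemma brk_of_mem (ht : G.IsTree) (hbrk : IsHorocycleBracket G o brk)
    (hxy : G.Adj x y) (hdy : G.dist o y = G.dist o x + 1)
    (ω : Ray G o) (hmem : ω ∈ raysThrough G o y) :
    brk x ω = (G.dist o x : ℤ) := by
  have h := brk_eq ht hbrk x ω (n := G.dist o y) (by omega)
  rw [(mem_raysThrough_iff y ω).mp hmem] at h
  rw [h, adj_dist hxy]
  omega

lemma mem_of_brk (ht : G.IsTree) (hbrk : IsHorocycleBracket G o brk)
    (ω : Ray G o) (h : brk y ω = (G.dist o y : ℤ)) :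
    ω ∈ raysThrough G o y := by
  have he := brk_eq ht hbrk y ω (le_refl (G.dist o y))
  rw [h] at he
  have h0 : G.dist y (ω.1 (G.dist o y)) = 0 := by omega
  have := (ht.isConnected.dist_eq_zero_iff).mp h0
  exact ⟨_, this.symm⟩

lemma brk_of_notmem (ht : G.IsTree) (hbrk : IsHorocycleBracket G o brk)
    (hxy : G.Adj x y) (hdy : G.dist o y = G.dist o x + 1)
    (ω : Ray G o) (hmem : ω ∉ raysThrough G o y) :
    brk y ω = brk x ω - 1 := by
  have hnot : ∀ n, ω.1 n ≠ y := fun n hn => hmem ⟨n, hn⟩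
  obtain ⟨jx, hjxle, hincx, hprex, haftx⟩ := dist_after ht x ω
  obtain ⟨jy, hjyle, hincy, hprey, hafty⟩ := dist_after ht y ω
  set Dx := G.dist o x with hDx
  -- the two turning times agree, or jy = jx + 1
  have hcases : jx = jy ∨ jy = jx + 1 := by
    set n := max jx jy with hn
    have h1 := haftx n (le_max_left _ _)
    have h2 := hafty n (le_max_right _ _)
    have c1 : G.dist (ω.1 n) x = G.dist x (ω.1 n) := SimpleGraph.dist_comm
    have c2 : G.dist (ω.1 n) y = G.dist y (ω.1 n) := SimpleGraph.dist_comm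
    rcases dist_tri ht hxy (ω.1 n) with h | h <;> omega
  rcases hcases with hje | hje
  · -- main case : brk y = brk x - 1
    have hx := brk_eq ht hbrk x ω (n := Dx + 1) (by omega)
    have hy := brk_eq ht hbrk y ω (n := Dx + 1) (by omega)
    have h1 := haftx (Dx + 1) (by omega)
    have h2 := hafty (Dx + 1) (by omega)
    omega
  · -- impossible case
    exfalso
    -- step jx is increasing for x, decreasing for y
    have hix : G.dist x (ω.1 (jx + 1)) = G.dist x (ω.1 jx) + 1 := hincx jx le_rfl
    have hdy1 := hprey jx (by omega)
    have hdy2 := hprey (jx + 1) (by omega)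
    have hdx1 := hprex jx le_rfl
    by_cases h0 : G.dist x (ω.1 jx) = 0
    · -- the ray is at x at time jx and moves to y : contradiction with hnot
      have hx0 : x = ω.1 jx := (ht.isConnected.dist_eq_zero_iff).mp h0
      have : G.dist y (ω.1 jx) = 1 := by rw [← hx0]; exact adj_dist hxy.symm
      have h3 : G.dist y (ω.1 (jx + 1)) = 0 := by omega
      exact hnot (jx + 1) ((ht.isConnected.dist_eq_zero_iff).mp h3).symm
    · -- unique closer neighbor argument
      have hne : G.dist (ω.1 jx) x ≠ 0 := by
        rw [SimpleGraph.dist_comm]; exact h0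
      obtain ⟨s, hs, hsd⟩ := exists_closer ht hne
      -- s is closer to y as well
      have ht1 : G.dist s y ≤ G.dist s x + G.dist x y := ht.isConnected.dist_triangle
      have ht2 : G.dist (ω.1 jx) y ≤ G.dist (ω.1 jx) s + G.dist s y :=
        ht.isConnected.dist_triangle
      have c1 : G.dist (ω.1 jx) x = G.dist x (ω.1 jx) := SimpleGraph.dist_comm
      have c2 : G.dist (ω.1 jx) y = G.dist y (ω.1 jx) := SimpleGraph.dist_comm
      have c3 : G.dist (ω.1 (jx + 1)) y = G.dist y (ω.1 (jx + 1)) := SimpleGraph.dist_comm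
      rw [adj_dist hxy] at ht1
      rw [adj_dist hs] at ht2
      have hclose : G.dist s y + 1 = G.dist (ω.1 jx) y := by omega
      have hclose2 : G.dist (ω.1 (jx + 1)) y + 1 = G.dist (ω.1 jx) y := by omega
      have hse : s = ω.1 (jx + 1) :=
        closer_unique ht hs (ray_adj ω jx) hclose hclose2
      rw [hse] at hsd
      have c4 : G.dist (ω.1 (jx + 1)) x = G.dist x (ω.1 (jx + 1)) := SimpleGraph.dist_comm
      omega

end BrkAux
namespace TopAux

open RayAux BrkAux

variable {V : Type*} {G : SimpleGraph V} {o : V}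

lemma isOpen_raysThrough (v : V) : IsOpen (raysThrough G o v) :=
  TopologicalSpace.isOpen_generateFrom_of_mem ⟨v, rfl⟩

lemma isOpen_eval (n : ℕ) (w : V) : IsOpen {ω : Ray G o | ω.1 n = w} := by
  by_cases hne : ∃ ω : Ray G o, ω.1 n = w
  · obtain ⟨ω₀, h₀⟩ := hne
    have hd : G.dist o w = n := by rw [← h₀, ray_dist]
    have he : {ω : Ray G o | ω.1 n = w} = raysThrough G o w := by
      ext ω
      rw [Set.mem_setOf_eq, mem_raysThrough_iff, hd]
    rw [he]
    exact isOpen_raysThrough w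
  · have he : {ω : Ray G o | ω.1 n = w} = ∅ := by
      ext ω
      simp only [Set.mem_setOf_eq, Set.mem_empty_iff_false, iff_false]
      exact fun h => hne ⟨ω, h⟩
    rw [he]
    exact isOpen_empty

lemma isOpen_pred (n : ℕ) (p : V → Prop) : IsOpen {ω : Ray G o | p (ω.1 n)} := by
  have he : {ω : Ray G o | p (ω.1 n)} = ⋃ w ∈ {w : V | p w}, {ω : Ray G o | ω.1 n = w} := by
    ext ω
    simp only [Set.mem_setOf_eq, Set.mem_iUnion]
    constructor
    · intro h; exact ⟨ω.1 n, h, rfl⟩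
    · rintro ⟨w, hw, hww⟩; rw [hww]; exact hw
  rw [he]
  exact isOpen_biUnion (fun w _ => isOpen_eval n w)

lemma isClopen_pred (n : ℕ) (p : V → Prop) : IsClopen {ω : Ray G o | p (ω.1 n)} := by
  refine ⟨?_, isOpen_pred n p⟩
  rw [← isOpen_compl_iff]
  have he : {ω : Ray G o | p (ω.1 n)}ᶜ = {ω : Ray G o | ¬ p (ω.1 n)} := rfl
  rw [he]
  exact isOpen_pred n (fun w => ¬ p w)

lemma isClopen_raysThrough (v : V) : IsClopen (raysThrough G o v) := by
  have he : raysThrough G o v = {ω : Ray G o | ω.1 (G.dist o v) = v} := by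
    ext ω; exact mem_raysThrough_iff v ω
  rw [he]
  exact isClopen_pred (G.dist o v) (fun w => w = v)

variable {μ : Set (Ray G o) → ℂ}

lemma measure_split (hμ : IsFAMeasure μ)
    {U Y : Set (Ray G o)} (hU : IsClopen U) (hY : IsClopen Y) :
    μ U = μ (U ∩ Y) + μ (U \ Y) := by
  have h := hμ.2 (U ∩ Y) (U \ Y) (hU.inter hY) (hU.diff hY)
  have h1 : (U ∩ Y) ∪ (U \ Y) = U := Set.inter_union_diff U Y
  have h2 : (U ∩ Y) ∩ (U \ Y) = ∅ := by
    ext ω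
    simp only [Set.mem_inter_iff, Set.mem_diff, Set.mem_empty_iff_false, iff_false]
    tauto
  rw [h1, h2, hμ.1, add_zero] at h
  exact h

lemma measure_biUnion (hμ : IsFAMeasure μ) {ι : Type*} [DecidableEq ι] (s : Finset ι)
    (f : ι → Set (Ray G o))
    (hcl : ∀ i ∈ s, IsClopen (f i))
    (hdisj : ∀ i ∈ s, ∀ j ∈ s, i ≠ j → f i ∩ f j = ∅) :
    μ (⋃ i ∈ s, f i) = ∑ i ∈ s, μ (f i) := by
  induction s using Finset.induction_on with
  | empty => simpa using hμ.1
  | @insert a s ha ih =>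
    rw [Finset.set_biUnion_insert]
    have hclS : IsClopen (⋃ i ∈ s, f i) :=
      isClopen_biUnion_finset (fun i hi => hcl i (Finset.mem_insert_of_mem hi))
    have hdisjS : f a ∩ ⋃ i ∈ s, f i = ∅ := by
      ext ω
      simp only [Set.mem_inter_iff, Set.mem_iUnion, Set.mem_empty_iff_false, iff_false,
        not_and]
      rintro ha' ⟨i, hi, hfi⟩
      have := hdisj a (Finset.mem_insert_self a s) i (Finset.mem_insert_of_mem hi)
        (fun he => ha (he ▸ hi))
      have : ω ∈ f a ∩ f i := ⟨ha', hfi⟩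
      rw [‹f a ∩ f i = ∅›] at this
      exact this
    have key := hμ.2 (f a) (⋃ i ∈ s, f i) (hcl a (Finset.mem_insert_self a s)) hclS
    rw [hdisjS, hμ.1, add_zero] at key
    rw [Finset.sum_insert ha, key,
      ih (fun i hi => hcl i (Finset.mem_insert_of_mem hi))
        (fun i hi j hj hij => hdisj i (Finset.mem_insert_of_mem hi) j
          (Finset.mem_insert_of_mem hj) hij)]

end TopAux
namespace PoisAux

open TreeAux RayAux BrkAux TopAux

variable {V : Type*} {G : SimpleGraph V} {o : V} {brk : V → Ray G o → ℤ}
  {z : ℂ} {μ : Set (Ray G o) → ℂ}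

/-- The level set of the horocycle bracket. -/
def Bset (brk : V → Ray G o → ℤ) (x : V) (t : ℤ) : Set (Ray G o) := {ω | brk x ω = t}

lemma isClopen_Bset (ht : G.IsTree) (hbrk : IsHorocycleBracket G o brk) (x : V) (t : ℤ) :
    IsClopen (Bset brk x t) := by
  have he : Bset brk x t
      = {ω : Ray G o | ((G.dist o x : ℤ) - G.dist x (ω.1 (G.dist o x)) = t)} := by
    ext ω
    rw [Bset, Set.mem_setOf_eq, Set.mem_setOf_eq, brk_eq ht hbrk x ω (le_refl _)]
  rw [he]
  exact isClopen_pred (G.dist o x) (fun w => (G.dist o x : ℤ) - G.dist x w = t)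

lemma Bset_empty (ht : G.IsTree) (hbrk : IsHorocycleBracket G o brk) (x : V) (t : ℤ)
    (hno : t ∉ Finset.Icc (-(G.dist o x : ℤ)) (G.dist o x : ℤ)) :
    Bset brk x t = ∅ := by
  ext ω
  simp only [Bset, Set.mem_setOf_eq, Set.mem_empty_iff_false, iff_false]
  intro h
  exact hno (h ▸ brk_mem ht hbrk x ω)

lemma poisson_eq (ht : G.IsTree) (hbrk : IsHorocycleBracket G o brk)
    (hμ : IsFAMeasure μ) (x : V) :
    poisson G o brk z μ x =
      ∑ t ∈ Finset.Icc (-(G.dist o x : ℤ)) (G.dist o x : ℤ), z ^ t * μ (Bset brk x t) := by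
  classical
  set I := Finset.Icc (-(G.dist o x : ℤ)) (G.dist o x : ℤ) with hI
  set A := I.image (fun t => z ^ t) with hA
  have hsupp : (Function.support fun c => c * μ {ω : Ray G o | z ^ brk x ω = c}) ⊆ ↑A := by
    intro c hc
    by_cases hce : ∃ ω : Ray G o, z ^ brk x ω = c
    · obtain ⟨ω, hω⟩ := hce
      exact Finset.mem_coe.mpr (Finset.mem_image.mpr ⟨brk x ω, brk_mem ht hbrk x ω, hω⟩)
    · exfalso
      apply hc
      have he : {ω : Ray G o | z ^ brk x ω = c} = ∅ := by
        ext ω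
        simp only [Set.mem_setOf_eq, Set.mem_empty_iff_false, iff_false]
        exact fun h => hce ⟨ω, h⟩
      show c * μ {ω : Ray G o | z ^ brk x ω = c} = 0
      rw [he, hμ.1, mul_zero]
  rw [poisson, finsum_eq_sum_of_support_subset _ hsupp]
  have hS : ∀ c : ℂ, {ω : Ray G o | z ^ brk x ω = c}
      = ⋃ t ∈ I.filter (fun t => z ^ t = c), Bset brk x t := by
    intro c
    ext ω
    simp only [Set.mem_setOf_eq, Set.mem_iUnion, Finset.mem_filter, Bset, exists_prop]
    constructor
    · intro h
      exact ⟨brk x ω, ⟨brk_mem ht hbrk x ω, h⟩, rfl⟩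
    · rintro ⟨t, ⟨_, hzc⟩, hbt⟩
      rw [hbt, hzc]
  calc ∑ c ∈ A, c * μ {ω : Ray G o | z ^ brk x ω = c}
      = ∑ c ∈ A, ∑ t ∈ I.filter (fun t => z ^ t = c), z ^ t * μ (Bset brk x t) := by
        refine Finset.sum_congr rfl (fun c _ => ?_)
        rw [hS c, measure_biUnion hμ _ _
          (fun t _ => isClopen_Bset ht hbrk x t)
          (fun t _ t' _ htt => ?_), Finset.mul_sum]
        · refine Finset.sum_congr rfl (fun t hti => ?_)
          rw [(Finset.mem_filter.mp hti).2]
        · ext ω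
          simp only [Bset, Set.mem_inter_iff, Set.mem_setOf_eq, Set.mem_empty_iff_false,
            iff_false, not_and]
          intro h1 h2
          exact htt (h1 ▸ h2 ▸ rfl)
    _ = ∑ t ∈ I, z ^ t * μ (Bset brk x t) :=
        Finset.sum_fiberwise_of_maps_to (fun t hti => Finset.mem_image_of_mem _ hti) _

end PoisAux
namespace EdgeAux

open TreeAux RayAux BrkAux TopAux PoisAux

variable {V : Type*} {G : SimpleGraph V} {o : V} {brk : V → Ray G o → ℤ}
  {z : ℂ} {μ : Set (Ray G o) → ℂ}

lemma poisson_edge (ht : G.IsTree) (hbrk : IsHorocycleBracket G o brk)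
    (hμ : IsFAMeasure μ) (hz0 : z ≠ 0)
    {x y : V} (hxy : G.Adj x y) (hdy : G.dist o y = G.dist o x + 1) :
    poisson G o brk z μ y
      = z⁻¹ * poisson G o brk z μ x
        + (z - z⁻¹) * z ^ (G.dist o x) * μ (raysThrough G o y) := by
  classical
  set D := G.dist o x with hD
  set Ω : Set (Ray G o) := raysThrough G o y with hΩ
  have hΩcl : IsClopen Ω := isClopen_raysThrough y
  set Ix := Finset.Icc (-(D : ℤ)) (D : ℤ) with hIx
  set Iy := Finset.Icc (-((D : ℤ) + 1)) ((D : ℤ) + 1) with hIy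
  -- the bracket at y on Ω
  have hBy : ∀ t : ℤ, Bset brk y t ∩ Ω = if t = (D : ℤ) + 1 then Ω else ∅ := by
    intro t
    ext ω
    by_cases hteq : t = (D : ℤ) + 1 <;> simp only [hteq, if_true, if_false, Set.mem_inter_iff,
      Set.mem_empty_iff_false, iff_false, not_and, Bset, Set.mem_setOf_eq]
    · constructor
      · rintro ⟨_, h2⟩; exact h2
      · intro h2
        refine ⟨?_, h2⟩
        have := brk_of_mem_self ht hbrk ω h2
        rw [this, hdy]; push_cast; ring
    · intro h1 h2
      have := brk_of_mem_self ht hbrk ω h2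
      rw [h1] at this
      rw [hdy] at this
      push_cast at this
      omega
  have hBx : ∀ t : ℤ, Bset brk x t ∩ Ω = if t = (D : ℤ) then Ω else ∅ := by
    intro t
    ext ω
    by_cases hteq : t = (D : ℤ) <;> simp only [hteq, if_true, if_false, Set.mem_inter_iff,
      Set.mem_empty_iff_false, iff_false, not_and, Bset, Set.mem_setOf_eq]
    · constructor
      · rintro ⟨_, h2⟩; exact h2
      · intro h2
        exact ⟨brk_of_mem ht hbrk hxy hdy ω h2, h2⟩
    · intro h1 h2
      have := brk_of_mem ht hbrk hxy hdy ω h2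
      rw [h1] at this
      exact hteq this
  have hByd : ∀ t : ℤ, Bset brk y t \ Ω = Bset brk x (t + 1) \ Ω := by
    intro t
    ext ω
    simp only [Set.mem_diff, Bset, Set.mem_setOf_eq]
    constructor
    · rintro ⟨h1, h2⟩
      have := brk_of_notmem ht hbrk hxy hdy ω h2
      exact ⟨by omega, h2⟩
    · rintro ⟨h1, h2⟩
      have := brk_of_notmem ht hbrk hxy hdy ω h2
      exact ⟨by omega, h2⟩
  -- decompose P y
  have hPy : poisson G o brk z μ y
      = ∑ t ∈ Iy, z ^ t * μ (Bset brk y t) := by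
    rw [poisson_eq ht hbrk hμ y, hdy]
    push_cast
    rfl
  have hPx : poisson G o brk z μ x
      = ∑ t ∈ Ix, z ^ t * μ (Bset brk x t) := poisson_eq ht hbrk hμ x
  have hsplit : ∀ (v : V) (t : ℤ), μ (Bset brk v t)
      = μ (Bset brk v t ∩ Ω) + μ (Bset brk v t \ Ω) :=
    fun v t => measure_split hμ (isClopen_Bset ht hbrk v t) hΩcl
  have hDnn : (0 : ℤ) ≤ (D : ℤ) := Int.natCast_nonneg _
  -- sum of the Ω-parts for y
  have hS1 : ∑ t ∈ Iy, z ^ t * μ (Bset brk y t ∩ Ω) = z ^ ((D : ℤ) + 1) * μ Ω := by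
    rw [Finset.sum_eq_single_of_mem ((D : ℤ) + 1)]
    · rw [hBy, if_pos rfl]
    · simp only [hIy, Finset.mem_Icc]
      omega
    · intro t _ htne
      rw [hBy, if_neg htne, hμ.1, mul_zero]
  -- sum of the Ω-parts for x
  have hS1x : ∑ t ∈ Ix, z ^ t * μ (Bset brk x t ∩ Ω) = z ^ (D : ℤ) * μ Ω := by
    rw [Finset.sum_eq_single_of_mem ((D : ℤ))]
    · rw [hBx, if_pos rfl]
    · simp only [hIx, Finset.mem_Icc]
      omega
    · intro t _ htne
      rw [hBx, if_neg htne, hμ.1, mul_zero]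
  -- reindexing the off-Ω parts for y
  have hS2 : ∑ t ∈ Iy, z ^ t * μ (Bset brk y t \ Ω)
      = z⁻¹ * ∑ t ∈ Ix, z ^ t * μ (Bset brk x t \ Ω) := by
    have step1 : ∑ t ∈ Iy, z ^ t * μ (Bset brk y t \ Ω)
        = ∑ t ∈ Iy, (fun s : ℤ => z ^ (s - 1) * μ (Bset brk x s \ Ω)) (t + 1) := by
      refine Finset.sum_congr rfl (fun t _ => ?_)
      simp only [add_sub_cancel_right]
      rw [hByd]
    have step2 : ∑ t ∈ Iy, (fun s : ℤ => z ^ (s - 1) * μ (Bset brk x s \ Ω)) (t + 1)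
        = ∑ s ∈ Finset.Icc (-(D : ℤ)) ((D : ℤ) + 2),
            z ^ (s - 1) * μ (Bset brk x s \ Ω) := by
      have hm := Finset.sum_map Iy (addRightEmbedding (1 : ℤ))
        (fun s : ℤ => z ^ (s - 1) * μ (Bset brk x s \ Ω))
      simp only [addRightEmbedding_apply] at hm
      rw [← hm]
      congr 1
      rw [hIy, Finset.map_add_right_Icc]
      congr 1 <;> ring
    have step3 : ∑ s ∈ Finset.Icc (-(D : ℤ)) ((D : ℤ) + 2),
          z ^ (s - 1) * μ (Bset brk x s \ Ω)
        = ∑ s ∈ Ix, z ^ (s - 1) * μ (Bset brk x s \ Ω) := by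
      symm
      refine Finset.sum_subset ?_ ?_
      · intro t hti
        simp only [hIx, Finset.mem_Icc] at hti
        simp only [Finset.mem_Icc]
        omega
      · intro t hti htno
        have hBe : Bset brk x t = ∅ := by
          refine Bset_empty ht hbrk x t ?_
          simpa [hIx] using htno
        rw [hBe, Set.empty_diff, hμ.1, mul_zero]
    rw [step1, step2, step3, Finset.mul_sum]
    refine Finset.sum_congr rfl (fun t _ => ?_)
    rw [zpow_sub_one₀ hz0]
    ring
  -- put everything together
  have hPy2 : poisson G o brk z μ y
      = z ^ ((D : ℤ) + 1) * μ Ω + z⁻¹ * ∑ t ∈ Ix, z ^ t * μ (Bset brk x t \ Ω) := by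
    rw [hPy]
    calc ∑ t ∈ Iy, z ^ t * μ (Bset brk y t)
        = ∑ t ∈ Iy, (z ^ t * μ (Bset brk y t ∩ Ω) + z ^ t * μ (Bset brk y t \ Ω)) := by
          refine Finset.sum_congr rfl (fun t _ => ?_)
          rw [hsplit y t, mul_add]
      _ = _ := by rw [Finset.sum_add_distrib, hS1, hS2]
  have hPx2 : ∑ t ∈ Ix, z ^ t * μ (Bset brk x t \ Ω)
      = poisson G o brk z μ x - z ^ (D : ℤ) * μ Ω := by
    rw [hPx]
    have : ∑ t ∈ Ix, z ^ t * μ (Bset brk x t)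
        = ∑ t ∈ Ix, (z ^ t * μ (Bset brk x t ∩ Ω) + z ^ t * μ (Bset brk x t \ Ω)) := by
      refine Finset.sum_congr rfl (fun t _ => ?_)
      rw [hsplit x t, mul_add]
    rw [this, Finset.sum_add_distrib, hS1x]
    ring
  rw [hPy2, hPx2]
  have hzd : z ^ ((D : ℤ)) = z ^ D := zpow_natCast z D
  have hzd1 : z ^ ((D : ℤ) + 1) = z ^ D * z := by
    rw [zpow_add_one₀ hz0, hzd]
  rw [hzd, hzd1]
  ring

end EdgeAux

/-- Let `μ` be a finitely additive measure on `Ω`, `z ∉ {-1,0,1}`,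
`f = P_z(μ)`, and let `x_0, x_1, …, x_k` be a chain pointing away from `o`
with `d(o,x_0) = m`. Then
`f(x_k)/z^{m+k} = f(x_0)/z^{m+2k} + ((z²-1)/z²) Σ_{j=1}^{k} z^{2(j-k)} μ(Ω(x_j))`. -/
theorem stmt_17 {V : Type*} (G : SimpleGraph V) (htree : G.IsTree) [G.LocallyFinite]
    (o : V) (brk : V → Ray G o → ℤ) (hbrk : IsHorocycleBracket G o brk)
    (z : ℂ) (hz0 : z ≠ 0) (hz1 : z ≠ 1) (hzm1 : z ≠ -1)
    (μ : Set (Ray G o) → ℂ) (hμ : IsFAMeasure μ)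
    (m k : ℕ) (c : ℕ → V)
    (hadj : ∀ j, j < k → G.Adj (c j) (c (j + 1)))
    (hdist : ∀ j, j ≤ k → G.dist o (c j) = m + j) :
    poisson G o brk z μ (c k) / z ^ (m + k)
      = poisson G o brk z μ (c 0) / z ^ (m + 2 * k)
        + ((z ^ 2 - 1) / z ^ 2)
            * ∑ j ∈ Finset.Icc 1 k,
                z ^ (2 * ((j : ℤ) - (k : ℤ))) * μ (raysThrough G o (c j)) := by
  classical
  have key : ∀ (n : ℕ), (∀ j, j < n → G.Adj (c j) (c (j + 1))) →
      (∀ j, j ≤ n → G.dist o (c j) = m + j) →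
      poisson G o brk z μ (c n) / z ^ (m + n)
        = poisson G o brk z μ (c 0) / z ^ (m + 2 * n)
          + ((z ^ 2 - 1) / z ^ 2)
              * ∑ j ∈ Finset.Icc 1 n,
                  z ^ (2 * ((j : ℤ) - (n : ℤ))) * μ (raysThrough G o (c j)) := by
    intro n
    induction n with
    | zero =>
      intro _ _
      rw [Finset.Icc_eq_empty (by omega)]
      norm_num
    | succ k ih =>
      intro hadj' hdist'
      have ih' := ih (fun j hj => hadj' j (by omega)) (fun j hj => hdist' j (by omega))
      have hdist_k : G.dist o (c k) = m + k := hdist' k (by omega)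
      have hdy : G.dist o (c (k + 1)) = G.dist o (c k) + 1 := by
        rw [hdist' (k + 1) le_rfl, hdist_k]
        omega
      have hedge := EdgeAux.poisson_edge htree hbrk hμ hz0 (hadj' k (by omega)) hdy
      rw [hdist_k] at hedge
      have hsum : (∑ j ∈ Finset.Icc 1 (k + 1),
          z ^ (2 * ((j : ℤ) - ((k + 1 : ℕ) : ℤ))) * μ (raysThrough G o (c j)))
          = (z ^ 2)⁻¹ * (∑ j ∈ Finset.Icc 1 k,
              z ^ (2 * ((j : ℤ) - (k : ℤ))) * μ (raysThrough G o (c j)))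
            + μ (raysThrough G o (c (k + 1))) := by
        rw [Finset.sum_Icc_succ_top (by omega)]
        congr 1
        · rw [Finset.mul_sum]
          refine Finset.sum_congr rfl (fun j hj => ?_)
          have hexp : 2 * ((j : ℤ) - ((k + 1 : ℕ) : ℤ)) = (-2) + 2 * ((j : ℤ) - (k : ℤ)) := by
            push_cast
            ring
          have h2 : z ^ (-2 : ℤ) = (z ^ 2)⁻¹ := by
            rw [zpow_neg, show ((2:ℤ)) = ((2:ℕ):ℤ) from rfl, zpow_natCast]
          rw [hexp, zpow_add₀ hz0, h2, mul_assoc]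
        · have hexp : 2 * (((k + 1 : ℕ) : ℤ) - ((k + 1 : ℕ) : ℤ)) = 0 := by ring
          rw [hexp, zpow_zero, one_mul]
      have hzmk : z ^ (m + k) ≠ 0 := pow_ne_zero _ hz0
      have hP := (div_eq_iff hzmk).mp ih'
      have ha : z ^ (m + (k + 1)) = z ^ (m + k) * z := by
        rw [show m + (k + 1) = (m + k) + 1 by omega, pow_succ]
      have hb : z ^ (m + 2 * (k + 1)) = z ^ (m + 2 * k) * z ^ 2 := by
        rw [show m + 2 * (k + 1) = (m + 2 * k) + 2 by ring, pow_add]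
      have hzmk2 : z ^ (m + 2 * k) ≠ 0 := pow_ne_zero _ hz0
      rw [hsum, hedge, ha, hb, hP]
      set P0 := poisson G o brk z μ (c 0)
      set S := ∑ j ∈ Finset.Icc 1 k, z ^ (2 * ((j : ℤ) - (k : ℤ))) * μ (raysThrough G o (c j))
      set A := μ (raysThrough G o (c (k + 1)))
      set a := z ^ (m + k)
      set b := z ^ (m + 2 * k)
      have hre : z⁻¹ * ((P0 / b + (z ^ 2 - 1) / z ^ 2 * S) * a) + (z - z⁻¹) * a * A
          = a * (z⁻¹ * (P0 / b + (z ^ 2 - 1) / z ^ 2 * S) + (z - z⁻¹) * A) := by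
        ring
      rw [hre, mul_div_mul_left _ _ hzmk, ← div_div]
      generalize P0 / b = Q
      field_simp
      ring
  exact key k hadj hdist
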